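/- arXiv:1212.3740 — 3 statements merged into one kernel-verified Lean document; each statement's English description precedes it below -/
import Mathlib

section
/- Let S be a numerical semigroup with multiplicity m ≥ 2 and let g ≥ 1 be an integer such that for all nonzero s₁, s₂ ∈ S and all n ∈ {1,...,g}, s₁ + s₂ - n ∈ S. Then the conductor c of S satisfies c ≤ (x+1)m - x·g, where x = ⌊(m-2)/g⌋. -/
/-- If a numerical semigroup S with multiplicity m ≥ 2 admits the patterns
X₁+X₂-n for 1 ≤ n ≤ g, then its conductor c satisfies
c ≤ (x+1)m - x·g where x = ⌊(m-2)/g⌋. -/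
theorem conductor_bound_patterns (S : Set ℕ)
    (h0 : (0 : ℕ) ∈ S)
    (hadd : ∀ a b : ℕ, a ∈ S → b ∈ S → a + b ∈ S)
    (hfin : Sᶜ.Finite)
    (m : ℕ) (hm : IsLeast {s : ℕ | s ∈ S ∧ 0 < s} m) (hm2 : 2 ≤ m)
    (g : ℕ) (hg : 1 ≤ g)
    (hpat : ∀ s₁ s₂ : ℕ, s₁ ∈ S → s₂ ∈ S → s₁ ≠ 0 → s₂ ≠ 0 →
      ∀ n : ℕ, 1 ≤ n → n ≤ g → s₁ + s₂ - n ∈ S)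
    (c : ℕ) (hc : IsLeast {c' : ℕ | ∀ x : ℕ, c' ≤ x → x ∈ S} c) :
    c ≤ ((m - 2) / g + 1) * m - ((m - 2) / g) * g := by
  obtain ⟨⟨hmS, hmpos⟩, -⟩ := hm
  -- key lemma
  have L : ∀ k t : ℕ, m ≤ t → t ≤ (k+1)*m → (k+1)*m ≤ t + k*g → t ∈ S := by
    intro k
    induction k with
    | zero =>
      intro t h1 h2 h3
      have : t = m := by omega
      exact this ▸ hmS
    | succ k ih =>
      intro t h1 h2 h3
      set t' := min ((k+1)*m) (t - m + g) with ht'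
      have e1 : (k+1+1)*m = k*m + m + m := by ring
      have e2 : (k+1+1)*g = k*g + g + g := by ring
      have e3 : (k+1)*m = k*m + m := by ring
      have e4 : (k+1)*g = k*g + g := by ring
      have hm_le_t' : m ≤ t' := by
        refine le_min (by omega) ?_
        rcases le_or_gt m g with hgm | hgm
        · omega
        · have hkg : k*g ≤ k*m := Nat.mul_le_mul_left k (le_of_lt hgm)
          omega
      have ht'_le : t' ≤ (k+1)*m := min_le_left _ _
      have ht'_ge : (k+1)*m ≤ t' + k*g := by
        rcases le_total ((k+1)*m) (t - m + g) with h | h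
        · rw [ht', min_eq_left h]; omega
        · rw [ht', min_eq_right h]; omega
      have ht'S : t' ∈ S := ih t' hm_le_t' ht'_le ht'_ge
      have ht'_ub : t' ≤ t - m + g := min_le_right _ _
      have ht_le : t ≤ t' + m := by
        have : t - m ≤ (k+1)*m := by omega
        have : t - m ≤ t - m + g := by omega
        omega
      by_cases hn : t' + m = t
      · exact hn ▸ hadd t' m ht'S hmS
      · have hn1 : 1 ≤ t' + m - t := by omega
        have hng : t' + m - t ≤ g := by omega
        have := hpat t' m ht'S hmS (by omega) (by omega) (t' + m - t) hn1 hng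
        have heq : t' + m - (t' + m - t) = t := by omega
        exact heq ▸ this
  set x := (m - 2) / g with hx
  have hxg : x * g ≤ m - 2 := Nat.div_mul_le_self _ _
  have hxg2 : m - 2 < (x + 1) * g := by
    have h1 : g * x + (m-2) % g = m - 2 := Nat.div_add_mod (m-2) g
    have h2 := Nat.mod_lt (m-2) (show 0 < g by omega)
    have h3 : (x+1)*g = x*g + g := by ring
    have h4 : g * x = x * g := Nat.mul_comm g x
    omega
  have hBm : m ≤ (x+1)*m - x*g := by
    have e : (x+1)*m = x*m + m := by ring
    rcases Nat.eq_zero_or_pos x with h | h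
    · simp [h]
    · have : m ≤ x*m := Nat.le_mul_of_pos_left m h
      omega
  refine hc.2 ?_
  intro y hy
  have hmy : m ≤ y := le_trans hBm hy
  set k := max x ((y-1)/m) with hk
  have hdm := Nat.div_add_mod (y-1) m
  have hdlt := Nat.mod_lt (y-1) hmpos
  have hk1 : y ≤ (k+1)*m := by
    have h1 : y - 1 < ((y-1)/m + 1) * m := by
      have e5 : ((y-1)/m + 1)*m = (y-1)/m*m + m := by ring
      have e6 : m * ((y-1)/m) = (y-1)/m * m := Nat.mul_comm _ _
      omega
    have h2 : ((y-1)/m + 1) * m ≤ (k+1)*m :=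
      Nat.mul_le_mul_right m (by omega)
    omega
  have hk2 : (k+1)*m ≤ y + k*g := by
    rcases Nat.lt_or_ge x ((y-1)/m) with h | h
    · -- k = (y-1)/m > x
      have hkval : k = (y-1)/m := max_eq_right (le_of_lt h)
      have hkm : k * m ≤ y - 1 := by rw [hkval]; exact Nat.div_mul_le_self _ _
      have hkg : (x+1)*g ≤ k*g := Nat.mul_le_mul_right g (by omega)
      have e : (k+1)*m = k*m + m := by ring
      omega
    · have hkval : k = x := max_eq_left h
      have e : (x+1)*m = x*m + m := by ring
      have : (x+1)*m ≤ y + x*g := by omega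
      rw [hkval]; omega
  exact L k y hmy hk1 hk2
end

section
/- Let S be a numerical semigroup containing d ≥ 2 and g ≥ 1 an integer such that for all nonzero s₁, s₂ ∈ S and all n ∈ {1,...,g}, s₁ + s₂ - n ∈ S. Then for every x ≥ 0, the entire integer interval [(x+1)d - x·g, (x+1)d] is contained in S. -/
/-- If a numerical semigroup S contains d ≥ 2 and admits the patterns X₁+X₂-n
for 1 ≤ n ≤ g, then for every x ≥ 0 the integer interval
[(x+1)d - xg, (x+1)d] is contained in S. -/
theorem intervals_in_semigroup (S : Set ℕ)
    (h0 : (0 : ℕ) ∈ S)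
    (hadd : ∀ a b : ℕ, a ∈ S → b ∈ S → a + b ∈ S)
    (hfin : Sᶜ.Finite)
    (d : ℕ) (hd : d ∈ S) (hd2 : 2 ≤ d)
    (g : ℕ) (hg : 1 ≤ g)
    (hpat : ∀ s₁ s₂ : ℕ, s₁ ∈ S → s₂ ∈ S → s₁ ≠ 0 → s₂ ≠ 0 →
      ∀ n : ℕ, 1 ≤ n → n ≤ g → s₁ + s₂ - n ∈ S) :
    ∀ x : ℕ, ∀ y : ℕ,
      ((x + 1) * d : ℤ) - x * g ≤ (y : ℤ) → y ≤ (x + 1) * d → y ∈ S := by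
  intro x
  induction x with
  | zero =>
    intro y h1 h2
    have hy : y = d := by
      have h1' : (d : ℤ) ≤ y := by push_cast at h1 ⊢; linarith
      have h2' : (y : ℤ) ≤ d := by push_cast at h2 ⊢; linarith
      exact_mod_cast le_antisymm h2' h1'
    rwa [hy]
  | succ x ih =>
    intro y h1 h2
    push_cast at h1 h2
    have hxg : (0:ℤ) ≤ (x:ℤ) * g := by positivity
    have hxd : (0:ℤ) ≤ (x:ℤ) * d := by positivity
    have hdZ : (2:ℤ) ≤ d := by exact_mod_cast hd2
    have hgZ : (1:ℤ) ≤ g := by exact_mod_cast hg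
    by_cases hc : (y : ℤ) + g ≤ d
    · -- y is already in the x-interval
      apply ih y
      · linarith
      · linarith
    · push_neg at hc
      set L : ℤ := max (max 1 ((y:ℤ) - d)) (((x:ℤ)+1)*d - x*g) with hLdef
      have hL1 : 1 ≤ L := le_trans (le_max_left _ _) (le_max_left _ _)
      have hLyd : (y:ℤ) - d ≤ L := le_trans (le_max_right _ _) (le_max_left _ _)
      have hL2 : ((x:ℤ)+1)*d - x*g ≤ L := le_max_right _ _
      have hLub : L ≤ ((x:ℤ)+1)*d := by
        apply max_le (max_le ?_ ?_) ?_ <;> linarith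
      have hLn : L ≤ (y:ℤ) - d + g := by
        apply max_le (max_le ?_ ?_) ?_ <;> linarith
      set s : ℕ := L.toNat with hs
      have hsL : (s:ℤ) = L := Int.toNat_of_nonneg (by linarith)
      have hsS : s ∈ S := by
        apply ih s
        · rw [hsL]; exact hL2
        · have h := hsL ▸ hLub
          exact_mod_cast h
      have hsne : s ≠ 0 := by
        intro h
        rw [h] at hsL
        simp at hsL
        omega
      have hyd : y ≤ s + d := by
        have : (y:ℤ) ≤ (s:ℤ) + d := by rw [hsL]; linarith
        exact_mod_cast this
      set n : ℕ := s + d - y with hn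
      have hng : n ≤ g := by
        have h1n : ((n:ℤ)) = (s:ℤ) + d - y := by push_cast; omega
        have : ((n:ℤ)) ≤ g := by rw [h1n, hsL]; linarith
        exact_mod_cast this
      have hy' : s + d - n = y := by omega
      by_cases hn0 : n = 0
      · have hyeq : y = s + d := by omega
        rw [hyeq]
        exact hadd s d hsS hd
      · have := hpat s d hsS hd hsne (by omega) n (by omega) hng
        rwa [hy'] at this
end

section
/- For integers r ≥ 2 and a prime power q ≥ r, the incidence structure obtained from the affine plane AG(2,q) by taking all lines of r chosen parallel classes, restricted to the points lying on k chosen lines of a further parallel class (with k ≤ q, k ≥ 2, and r ≤ q), is a combinatorial configuration with kq points, rq lines, r lines through every point, and k points on every line. -/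
/-- The incidence structure obtained from the affine plane AG(2,q) (q a prime
power, modeled by a finite field F with |F| = q) by taking the lines of r
parallel classes (given by a set M of r slopes) restricted to the points on k
lines of a further parallel class (the vertical lines x = c, c ∈ K, |K| = k)
is a combinatorial (kq, rq, r, k)-configuration. -/
theorem affine_plane_configuration {F : Type*} [Field F] [Fintype F]
    (q r k : ℕ) (hq : Fintype.card F = q) (hr2 : 2 ≤ r) (hk2 : 2 ≤ k)
    (M K : Finset F) (hM : M.card = r) (hK : K.card = k) :
    Nat.card {p : F × F // p.1 ∈ K} = k * q ∧
    Nat.card (M × F) = r * q ∧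
    (∀ p : {p : F × F // p.1 ∈ K},
      Nat.card {l : M × F // (p : F × F).2 = (l.1 : F) * (p : F × F).1 + l.2}
        = r) ∧
    (∀ l : M × F,
      Nat.card {p : {p : F × F // p.1 ∈ K} //
        (p : F × F).2 = (l.1 : F) * (p : F × F).1 + l.2} = k) ∧
    (∀ p₁ p₂ : {p : F × F // p.1 ∈ K}, p₁ ≠ p₂ →
      Nat.card {l : M × F //
        (p₁ : F × F).2 = (l.1 : F) * (p₁ : F × F).1 + l.2 ∧
        (p₂ : F × F).2 = (l.1 : F) * (p₂ : F × F).1 + l.2} ≤ 1) := by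
  classical
  refine ⟨?_, ?_, ?_, ?_, ?_⟩
  · have e : {p : F × F // p.1 ∈ K} ≃ K × F :=
      ⟨fun p => (⟨p.1.1, p.2⟩, p.1.2), fun a => ⟨(a.1.1, a.2), a.1.2⟩,
        fun p => rfl, fun a => rfl⟩
    rw [Nat.card_congr e, Nat.card_prod, Nat.card_eq_fintype_card,
      Nat.card_eq_fintype_card, Fintype.card_coe, hK, hq]
  · rw [Nat.card_prod, Nat.card_eq_fintype_card, Nat.card_eq_fintype_card,
      Fintype.card_coe, hM, hq]
  · rintro ⟨⟨x, y⟩, hx⟩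
    have e : {l : M × F // y = (l.1 : F) * x + l.2} ≃ M :=
      { toFun := fun l => l.1.1
        invFun := fun m => ⟨(m, y - (m : F) * x), by ring⟩
        left_inv := fun l => by
          obtain ⟨⟨m, b⟩, hl⟩ := l
          exact Subtype.ext (Prod.ext rfl (sub_eq_of_eq_add' hl))
        right_inv := fun m => rfl }
    rw [Nat.card_congr e, Nat.card_eq_fintype_card, Fintype.card_coe, hM]
  · rintro ⟨⟨m, hm⟩, b⟩
    have e : {p : {p : F × F // p.1 ∈ K} //
        (p : F × F).2 = m * (p : F × F).1 + b} ≃ K :=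
      { toFun := fun p => ⟨(p.1 : F × F).1, p.1.2⟩
        invFun := fun a => ⟨⟨(a.1, m * a.1 + b), a.2⟩, rfl⟩
        left_inv := fun p => by
          obtain ⟨⟨⟨x, y⟩, hx⟩, hp⟩ := p
          exact Subtype.ext (Subtype.ext (Prod.ext rfl hp.symm))
        right_inv := fun a => rfl }
    rw [Nat.card_congr e, Nat.card_eq_fintype_card, Fintype.card_coe, hK]
  · rintro ⟨⟨x₁, y₁⟩, hx₁⟩ ⟨⟨x₂, y₂⟩, hx₂⟩ hne
    rw [Finite.card_le_one_iff_subsingleton]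
    constructor
    rintro ⟨⟨⟨m, hm⟩, b⟩, h1, h2⟩ ⟨⟨⟨m', hm'⟩, b'⟩, h1', h2'⟩
    simp only at h1 h2 h1' h2'
    by_cases hx : x₁ = x₂
    · exfalso
      apply hne
      subst hx
      have : y₁ = y₂ := by rw [h1, h2]
      subst this
      rfl
    · have hm : m = m' := by
        have hsub : x₁ - x₂ ≠ 0 := sub_ne_zero.mpr hx
        have : m * (x₁ - x₂) = m' * (x₁ - x₂) := by
          have e1 : y₁ - y₂ = m * (x₁ - x₂) := by rw [h1, h2]; ring
          have e2 : y₁ - y₂ = m' * (x₁ - x₂) := by rw [h1', h2']; ring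
          rw [← e1, e2]
        exact mul_right_cancel₀ hsub this
      subst hm
      have hb : b = b' := by
        exact add_left_cancel (h1.symm.trans h1')
      subst hb
      rfl
end
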